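/- arXiv:2312.03593 — 7 statements merged into one kernel-verified Lean document; each statement's English description precedes it below -/
import Mathlib

section
/- (Lemma 3(a)) Let g : (k+1)^𝒳 → ℝ≥0 be a monotone normalized k-submodular function, let 𝟎 = x⁰ ⊑ x¹ ⊑ … ⊑ xᵐ be a greedy chain for g, and let v be any k-set. With vᵖ = (v ⊔ xᵖ) ⊔ xᵖ, one has g(v) − g(vᵐ) ≤ g(xᵐ). -/
/-- A `k`-set: an assignment of each ground element to one of `k` parts or to none
(`none` meaning the element belongs to no part).  This encodes a tuple
`(S_1, …, S_k)` of pairwise disjoint subsets of `X`. -/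
abbrev KSet (X : Type*) (k : ℕ) := X → Option (Fin k)

namespace KSet

variable {X : Type*} {k : ℕ}

/-- The empty `k`-set `𝟎 = (∅, …, ∅)`. -/
def bot (X : Type*) (k : ℕ) : KSet X k := fun _ => none

/-- `le s t` is the partial order `s ⊑ t`, i.e. `Sᵢ ⊆ Tᵢ` for every `i ∈ [k]`. -/
def le (s t : KSet X k) : Prop := ∀ (x : X) (i : Fin k), s x = some i → t x = some i

/-- The meet `s ⊓ t`, whose `i`-th component is `Sᵢ ∩ Tᵢ`. -/
def meet (s t : KSet X k) : KSet X k := fun x => if s x = t x then s x else none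

/-- The join `s ⊔ t`, whose `i`-th component is `(Sᵢ ∪ Tᵢ) \ ⋃_{j ≠ i} (Sⱼ ∪ Tⱼ)`. -/
def join (s t : KSet X k) : KSet X k := fun x =>
  match s x, t x with
  | none, b => b
  | some i, none => some i
  | some i, some j => if i = j then some i else none

/-- The `k`-set `(x, i)` whose only nonempty component is `Sᵢ = {x}`. -/
def single [DecidableEq X] (x : X) (i : Fin k) : KSet X k :=
  fun y => if y = x then some i else none

/-- `s ⊔ (x, i)`: add the element `x` to the `i`-th part of `s`
(intended for `x ∉ E(s)`). -/
def add [DecidableEq X] (s : KSet X k) (x : X) (i : Fin k) : KSet X k :=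
  Function.update s x (some i)

end KSet

/-- The marginal gain `Δ_{x,i} g (s) = g (s ⊔ (x,i)) - g s`. -/
def marg {X : Type*} [DecidableEq X] {k : ℕ} (g : KSet X k → ℝ) (s : KSet X k)
    (x : X) (i : Fin k) : ℝ :=
  g (KSet.add s x i) - g s

/-- `g` is `k`-submodular: `g (s ⊓ t) + g (s ⊔ t) ≤ g s + g t` for all `k`-sets. -/
def KSubmodular {X : Type*} {k : ℕ} (g : KSet X k → ℝ) : Prop :=
  ∀ s t : KSet X k, g (KSet.meet s t) + g (KSet.join s t) ≤ g s + g t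

/-- `g` is monotone with respect to `⊑`. -/
def KMonotone {X : Type*} {k : ℕ} (g : KSet X k → ℝ) : Prop :=
  ∀ s t : KSet X k, KSet.le s t → g s ≤ g t

/-- The weight `w(s) = ∑_{x ∈ E(s)} w x` of a `k`-set. -/
def wtot {X : Type*} [Fintype X] {k : ℕ} (w : X → ℝ) (s : KSet X k) : ℝ :=
  ∑ x ∈ Finset.univ.filter (fun x => s x ≠ none), w x

/-- A greedy chain for `g`: `c 0 = 𝟎` and each step adds one new element at a
position maximizing the marginal gain over `i ∈ [k]`. -/
def GreedyChain {X : Type*} [DecidableEq X] {k : ℕ} (g : KSet X k → ℝ) (m : ℕ)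
    (c : ℕ → KSet X k) : Prop :=
  c 0 = KSet.bot X k ∧
  ∀ p, p < m → ∃ (xp : X) (ip : Fin k),
    c p xp = none ∧
    c (p + 1) = KSet.add (c p) xp ip ∧
    ∀ i : Fin k, marg g (c p) xp i ≤ marg g (c p) xp ip

lemma KSet.le_add {X : Type*} [DecidableEq X] {k : ℕ} (s : KSet X k) (x : X) (i : Fin k)
    (h : s x = none) : KSet.le s (KSet.add s x i) := by
  intro y j hy
  unfold KSet.add
  rcases eq_or_ne y x with h' | h'
  · subst h'; rw [h] at hy; exact absurd hy (by simp)
  · rw [Function.update_of_ne h']; exact hy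

lemma orthant {X : Type*} [DecidableEq X] {k : ℕ} (g : KSet X k → ℝ)
    (hsub : KSubmodular g) (s t : KSet X k) (hst : KSet.le s t)
    (x : X) (ht : t x = none) (i : Fin k) :
    marg g t x i ≤ marg g s x i := by
  have hs : s x = none := by
    cases h : s x with
    | none => rfl
    | some j => rw [hst x j h] at ht; exact absurd ht (by simp)
  have hmeet : KSet.meet (KSet.add s x i) t = s := by
    funext y
    unfold KSet.meet KSet.add
    rcases eq_or_ne y x with h' | h'
    · subst h'
      rw [Function.update_self, ht, hs]
      simp
    · rw [Function.update_of_ne h']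
      cases h'' : s y with
      | none => cases h3 : t y <;> simp
      | some j => rw [hst y j h'']; simp
  have hjoin : KSet.join (KSet.add s x i) t = KSet.add t x i := by
    funext y
    unfold KSet.join KSet.add
    rcases eq_or_ne y x with h' | h'
    · subst h'
      rw [Function.update_self, Function.update_self, ht]
    · rw [Function.update_of_ne h', Function.update_of_ne h']
      cases h'' : s y with
      | none => cases h3 : t y <;> rfl
      | some j => rw [hst y j h'']; simp
  have := hsub (KSet.add s x i) t
  rw [hmeet, hjoin] at this
  unfold marg
  linarith

lemma overwrite {X : Type*} {k : ℕ} (v s : KSet X k) (x : X) :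
    KSet.join (KSet.join v s) s x = (s x).elim (v x) some := by
  unfold KSet.join
  cases hs : s x with
  | none => cases v x <;> rfl
  | some j =>
    cases hv : v x with
    | none => simp
    | some i =>
      rcases eq_or_ne i j with h | h
      · subst h; simp
      · simp [h]

/-- **Lemma 3(a).** For a monotone normalized `k`-submodular `g`,
a greedy chain `𝟎 = x⁰ ⊑ … ⊑ xᵐ` and any `k`-set `v`, setting
`vᵐ = (v ⊔ xᵐ) ⊔ xᵐ`, one has `g v - g vᵐ ≤ g xᵐ`. -/
theorem lemma3a {X : Type*} [DecidableEq X] {k : ℕ}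
    (g : KSet X k → ℝ) (hnn : ∀ s : KSet X k, 0 ≤ g s) (hsub : KSubmodular g)
    (hmono : KMonotone g) (hnorm : g (KSet.bot X k) = 0)
    (m : ℕ) (c : ℕ → KSet X k) (hc : GreedyChain g m c) (v : KSet X k) :
    g v - g (KSet.join (KSet.join v (c m)) (c m)) ≤ g (c m) := by
  set D : ℕ → KSet X k := fun q => KSet.join (KSet.join v (c q)) (c q) with hDdef
  suffices h : ∀ p, p ≤ m → g v - g (D p) ≤ g (c p) from h m le_rfl
  intro p
  induction p with
  | zero =>
    intro _
    have h0 : D 0 = v := by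
      funext x
      show KSet.join (KSet.join v (c 0)) (c 0) x = v x
      rw [overwrite, hc.1]
      rfl
    rw [h0, hc.1, hnorm]
    simp
  | succ p ih =>
    intro hpm
    have hp : p < m := hpm
    obtain ⟨xp, ip, hfresh, hadd, hmax⟩ := hc.2 p hp
    have hDp : ∀ y, D p y = ((c p) y).elim (v y) some := fun y => overwrite v (c p) y
    have hD : D (p + 1) = KSet.add (D p) xp ip := by
      funext y
      show KSet.join (KSet.join v (c (p+1))) (c (p+1)) y = _
      rw [overwrite, hadd]
      unfold KSet.add
      rcases eq_or_ne y xp with h | h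
      · subst h; rw [Function.update_self, Function.update_self]; rfl
      · rw [Function.update_of_ne h, Function.update_of_ne h]
        exact (hDp y).symm
    have key : g (D p) - g (D (p + 1)) ≤ g (c (p + 1)) - g (c p) := by
      cases hv : D p xp with
      | none =>
        have h1 : g (D p) ≤ g (D (p + 1)) := by
          rw [hD]; exact hmono _ _ (KSet.le_add _ _ _ hv)
        have h2 : g (c p) ≤ g (c (p + 1)) := by
          rw [hadd]; exact hmono _ _ (KSet.le_add _ _ _ hfresh)
        linarith
      | some j =>
        set u : KSet X k := Function.update (D p) xp none with hu
        have hux : u xp = none := Function.update_self _ _ _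
        have hDpu : D p = KSet.add u xp j := by
          unfold KSet.add
          rw [hu, Function.update_idem, ← hv, Function.update_eq_self]
        have hDp1u : D (p + 1) = KSet.add u xp ip := by
          rw [hD]
          unfold KSet.add
          rw [hu, Function.update_idem]
        have hle : KSet.le (c p) u := by
          intro y i hy
          have hne : y ≠ xp := fun he => by rw [he, hfresh] at hy; exact absurd hy (by simp)
          rw [hu, Function.update_of_ne hne, hDp y, hy]
          rfl
        have h1 : 0 ≤ marg g u xp ip := by
          have := hmono _ _ (KSet.le_add u xp ip hux)
          unfold marg; linarith
        have h2 : marg g u xp j ≤ marg g (c p) xp j :=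
          orthant g hsub (c p) u hle xp hux j
        have h3 : marg g (c p) xp j ≤ marg g (c p) xp ip := hmax j
        have h4 : g (c (p + 1)) - g (c p) = marg g (c p) xp ip := by
          rw [hadd]; rfl
        have h5 : g (D p) - g (D (p + 1)) = marg g u xp j - marg g u xp ip := by
          rw [hDpu, hDp1u]; unfold marg; ring_nf
        linarith
    have := ih (le_of_lt hp)
    linarith
end

section
/- (Lemma 3(b)) Let k ≥ 2, let g : (k+1)^𝒳 → ℝ≥0 be a normalized k-submodular function (not necessarily monotone), let 𝟎 = x⁰ ⊑ x¹ ⊑ … ⊑ xᵐ be a greedy chain for g, and let v be any k-set. With vᵖ = (v ⊔ xᵖ) ⊔ xᵖ, one has g(v) − g(vᵐ) ≤ 2·g(xᵐ). -/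
section Aux

variable {X : Type*} [DecidableEq X] {k : ℕ}

lemma marg_pair (g : KSet X k → ℝ) (hsub : KSubmodular g) (s : KSet X k) (x : X)
    (hx : s x = none) {i j : Fin k} (hij : i ≠ j) :
    0 ≤ marg g s x i + marg g s x j := by
  have h := hsub (KSet.add s x i) (KSet.add s x j)
  have hmeet : KSet.meet (KSet.add s x i) (KSet.add s x j) = s := by
    funext y
    simp only [KSet.meet, KSet.add]
    by_cases hy : y = x
    · subst hy
      simp [Function.update_self, hx, hij]
    · simp [Function.update_of_ne hy]
  have hjoin : KSet.join (KSet.add s x i) (KSet.add s x j) = s := by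
    funext y
    simp only [KSet.join, KSet.add]
    by_cases hy : y = x
    · subst hy
      simp [Function.update_self, hx, hij]
    · simp only [Function.update_of_ne hy]
      cases s y <;> simp
  rw [hmeet, hjoin] at h
  simp only [marg]
  linarith

lemma marg_mono (g : KSet X k → ℝ) (hsub : KSubmodular g) (s t : KSet X k)
    (hts : KSet.le t s) (x : X) (hsx : s x = none) (htx : t x = none) (i : Fin k) :
    marg g s x i ≤ marg g t x i := by
  have h := hsub (KSet.add t x i) s
  have hmeet : KSet.meet (KSet.add t x i) s = t := by
    funext y
    simp only [KSet.meet, KSet.add]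
    by_cases hy : y = x
    · subst hy
      simp [Function.update_self, hsx, htx]
    · simp only [Function.update_of_ne hy]
      cases hty : t y with
      | none => split <;> simp_all
      | some a => rw [hts y a hty]; simp
  have hjoin : KSet.join (KSet.add t x i) s = KSet.add s x i := by
    funext y
    simp only [KSet.join, KSet.add]
    by_cases hy : y = x
    · subst hy
      simp [Function.update_self, hsx, htx]
    · simp only [Function.update_of_ne hy]
      cases hty : t y with
      | none => cases s y <;> simp
      | some a => rw [hts y a hty]; simp
  rw [hmeet, hjoin] at h
  simp only [marg]
  linarith

end Aux

/-- **Lemma 3(b).** For `k ≥ 2`, a (not necessarily monotone)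
normalized `k`-submodular `g`, a greedy chain `𝟎 = x⁰ ⊑ … ⊑ xᵐ` and any `k`-set
`v`, setting `vᵐ = (v ⊔ xᵐ) ⊔ xᵐ`, one has `g v - g vᵐ ≤ 2 * g xᵐ`. -/

theorem lemma3b {X : Type*} [DecidableEq X] {k : ℕ} (hk : 2 ≤ k)
    (g : KSet X k → ℝ) (hnn : ∀ s : KSet X k, 0 ≤ g s) (hsub : KSubmodular g)
    (hnorm : g (KSet.bot X k) = 0)
    (m : ℕ) (c : ℕ → KSet X k) (hc : GreedyChain g m c) (v : KSet X k) :
    g v - g (KSet.join (KSet.join v (c m)) (c m)) ≤ 2 * g (c m) := by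
  obtain ⟨hc0, hstep⟩ := hc
  set V : ℕ → KSet X k := fun p => KSet.join (KSet.join v (c p)) (c p) with hV
  show g v - g (V m) ≤ 2 * g (c m)
  have main : ∀ p, p ≤ m → g v - g (V p) ≤ 2 * g (c p) := by
    intro p hp
    induction p with
    | zero =>
      have hV0 : V 0 = v := by
        funext y
        simp only [hV, hc0, KSet.join, KSet.bot]
        cases v y <;> simp
      rw [hV0, hc0, hnorm]
      simp
    | succ p ih =>
      have hpm : p < m := hp
      obtain ⟨xp, ip, hnone, hadd, hmax⟩ := hstep p hpm
      have ih' := ih (le_of_lt hpm)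
      -- two distinct indices
      obtain ⟨j₀, hj₀⟩ : ∃ j : Fin k, j ≠ ip := by
        by_cases h0 : ip = ⟨0, by omega⟩
        · exact ⟨⟨1, by omega⟩, by rw [h0]; simp [Fin.ext_iff]⟩
        · exact ⟨⟨0, by omega⟩, fun h => h0 h.symm⟩
      -- greedy gain is nonnegative
      have hΔ : 0 ≤ marg g (c p) xp ip := by
        have h := marg_pair g hsub (c p) xp hnone hj₀
        have h1 := hmax j₀
        have h2 := hmax ip
        linarith
      have hgc : g (c (p + 1)) = g (c p) + marg g (c p) xp ip := by
        rw [hadd]; simp [marg]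
      -- c p ⊑ V p
      have hcle : KSet.le (c p) (V p) := by
        intro y a hy
        simp only [hV, KSet.join, hy]
        cases hvy : v y with
        | none => simp
        | some b =>
          by_cases hba : b = a <;> simp [hba]
      -- V p at xp equals v xp
      have hVx : V p xp = v xp := by
        simp only [hV, KSet.join, hnone]
        cases v xp <;> simp
      -- V (p+1) = update (V p) xp (some ip)
      have hVsucc : V (p + 1) = Function.update (V p) xp (some ip) := by
        funext y
        by_cases hy : y = xp
        · subst hy
          simp only [hV, hadd, KSet.join, KSet.add, Function.update_self]
          cases v y with
          | none => simp
          | some a => by_cases ha : a = ip <;> simp [ha]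
        · simp only [hV, hadd, KSet.join, KSet.add, Function.update_of_ne hy]
      -- case analysis on V p xp
      have key : g (V p) - g (V (p + 1)) ≤ 2 * marg g (c p) xp ip := by
        cases hvp : V p xp with
        | none =>
          have hVadd : V (p + 1) = KSet.add (V p) xp ip := hVsucc
          have h1 : - marg g (V p) xp ip ≤ marg g (V p) xp j₀ := by
            have := marg_pair g hsub (V p) xp hvp (Ne.symm hj₀)
            linarith
          have h2 : marg g (V p) xp j₀ ≤ marg g (c p) xp j₀ :=
            marg_mono g hsub (V p) (c p) hcle xp hvp hnone j₀
          have h3 := hmax j₀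
          have : g (V p) - g (V (p + 1)) = - marg g (V p) xp ip := by
            rw [hVadd]; simp [marg]
          linarith
        | some a =>
          by_cases ha : a = ip
          · subst ha
            have : V (p + 1) = V p := by
              rw [hVsucc, ← hvp, Function.update_eq_self]
            rw [this]
            linarith
          · set s' : KSet X k := Function.update (V p) xp none with hs'
            have hs'x : s' xp = none := Function.update_self _ _ _
            have hVp : V p = KSet.add s' xp a := by
              funext y
              by_cases hy : y = xp
              · subst hy
                simp [KSet.add, hs', hvp]
              · simp [KSet.add, hs', Function.update_of_ne hy]
            have hVp1 : V (p + 1) = KSet.add s' xp ip := by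
              rw [hVsucc]
              funext y
              by_cases hy : y = xp
              · subst hy; simp [KSet.add, hs']
              · simp [KSet.add, hs', Function.update_of_ne hy]
            have hcle' : KSet.le (c p) s' := by
              intro y b hy
              by_cases hy' : y = xp
              · subst hy'; rw [hnone] at hy; exact absurd hy (by simp)
              · rw [hs', Function.update_of_ne hy']
                exact hcle y b hy
            have h1 : - marg g s' xp ip ≤ marg g s' xp a := by
              have := marg_pair g hsub s' xp hs'x (fun h => ha h)
              linarith
            have h2 : marg g s' xp a ≤ marg g (c p) xp a :=
              marg_mono g hsub s' (c p) hcle' xp hs'x hnone a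
            have h3 := hmax a
            have heq : g (V p) - g (V (p + 1)) = marg g s' xp a - marg g s' xp ip := by
              rw [hVp, hVp1]; simp [marg]
            linarith
      rw [hgc]
      linarith
  exact main m le_rfl
end

section
/- Let g : (k+1)^𝒳 → ℝ≥0 be a monotone normalized k-submodular function, let 𝟎 = x⁰ ⊑ x¹ ⊑ … ⊑ xᵐ = 𝐱 be a greedy chain for g, let τ ∈ ℝ, and let v be a k-set with g(v) ≥ τ. Then τ − g(𝐱) ≤ g(𝐱) + Σ_{y ∈ E(v) ∖ E(𝐱)} Δ_{y, v(y)} g(𝐱). -/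
section Aux
variable {X : Type*} [DecidableEq X] {k : ℕ} {g : KSet X k → ℝ}

lemma marg_nonneg (hmono : KMonotone g) (s : KSet X k) (y : X) (i : Fin k)
    (h : s y = none) : 0 ≤ marg g s y i := by
  have : KSet.le s (KSet.add s y i) := by
    intro z j hz
    have hzy : z ≠ y := by rintro rfl; rw [h] at hz; cases hz
    simp [KSet.add, Function.update_of_ne hzy, hz]
  have := hmono _ _ this
  simp only [marg]; linarith

lemma marg_le (hsub : KSubmodular g) (s t : KSet X k) (y : X) (i : Fin k)
    (hst : KSet.le s t) (ht : t y = none) : marg g t y i ≤ marg g s y i := by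
  have hs : s y = none := by
    cases h : s y with
    | none => rfl
    | some j => rw [hst y j h] at ht; cases ht
  have hmeet : KSet.meet (KSet.add s y i) t = s := by
    funext z
    by_cases hz : z = y
    · subst hz
      simp [KSet.meet, KSet.add, Function.update_self, ht, hs]
    · simp only [KSet.meet, KSet.add, Function.update_of_ne hz]
      cases h : s z with
      | none => simp
      | some j => rw [hst z j h]; simp
  have hjoin : KSet.join (KSet.add s y i) t = KSet.add t y i := by
    funext z
    by_cases hz : z = y
    · subst hz
      simp [KSet.join, KSet.add, Function.update_self, ht]
    · simp only [KSet.join, KSet.add, Function.update_of_ne hz]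
      cases h : s z with
      | none => simp
      | some j => rw [hst z j h]; simp
  have := hsub (KSet.add s y i) t
  rw [hmeet, hjoin] at this
  simp only [marg]; linarith

/-- Extend `x` by assigning each element of `D` position `f y`. -/
def kextend (x : KSet X k) (D : Finset X) (f : X → Fin k) : KSet X k :=
  fun z => if z ∈ D then some (f z) else x z

lemma g_kextend_le (hsub : KSubmodular g) (hmono : KMonotone g)
    (x : KSet X k) (D : Finset X) (f : X → Fin k)
    (hD : ∀ y ∈ D, x y = none) :
    g (kextend x D f) ≤ g x + ∑ y ∈ D, marg g x y (f y) := by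
  classical
  induction D using Finset.induction with
  | empty =>
    have : kextend x ∅ f = x := funext fun z => by simp [kextend]
    simp [this]
  | @insert a s ha ih =>
    have hxa : x a = none := hD a (Finset.mem_insert_self a s)
    have hDs : ∀ y ∈ s, x y = none := fun y hy => hD y (Finset.mem_insert_of_mem hy)
    have hea : kextend x s f a = none := by simp [kextend, ha, hxa]
    have hle : KSet.le x (kextend x s f) := by
      intro z j hz
      have : z ∉ s := fun hzs => by rw [hDs z hzs] at hz; cases hz
      simp [kextend, this, hz]
    have heq : kextend x (insert a s) f = KSet.add (kextend x s f) a (f a) := by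
      funext z
      by_cases hz : z = a
      · subst hz; simp [kextend, KSet.add, Function.update_self]
      · simp [kextend, KSet.add, Function.update_of_ne hz, hz]
    have hm : marg g (kextend x s f) a (f a) ≤ marg g x a (f a) :=
      marg_le hsub x (kextend x s f) a (f a) hle hea
    have := ih hDs
    rw [heq, Finset.sum_insert ha]
    simp only [marg] at hm this ⊢
    linarith

end Aux

/-- For a monotone normalized `k`-submodular `g`, a greedy
chain `𝟎 = x⁰ ⊑ … ⊑ xᵐ = 𝐱`, `τ : ℝ`, and a `k`-set `v` with `g v ≥ τ`:
`τ - g 𝐱 ≤ g 𝐱 + ∑_{y ∈ E(v) \ E(𝐱)} Δ_{y, v(y)} g (𝐱)`. -/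

theorem tau_sub_le_monotone {X : Type*} [Fintype X] [DecidableEq X] {k : ℕ}
    (g : KSet X k → ℝ) (hnn : ∀ s : KSet X k, 0 ≤ g s) (hsub : KSubmodular g)
    (hmono : KMonotone g) (hnorm : g (KSet.bot X k) = 0)
    (m : ℕ) (c : ℕ → KSet X k) (hc : GreedyChain g m c)
    (τ : ℝ) (v : KSet X k) (hv : τ ≤ g v) :
    τ - g (c m) ≤ g (c m) +
      ∑ y ∈ Finset.univ.filter (fun y => v y ≠ none ∧ c m y = none),
        (v y).elim 0 (fun i => marg g (c m) y i) := by
  classical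
  -- interpolating chain
  set o : ℕ → KSet X k := fun p z => match c p z with
    | none => v z
    | some i => some i with ho
  have ho' : ∀ p z, o p z = match c p z with | none => v z | some i => some i :=
    fun p z => rfl
  -- main chain inequality
  have key : ∀ p, p ≤ m → g v ≤ g (o p) + (g (c p) - g (c 0)) := by
    intro p
    induction p with
    | zero =>
      intro hp
      have h0 : o 0 = v := by
        funext z
        rw [ho', hc.1]
        rfl
      rw [h0]; linarith
    | succ p ih =>
      intro hp
      have hpm : p < m := Nat.lt_of_succ_le hp
      have ihh := ih (Nat.le_of_lt hpm)
      obtain ⟨y, i, hy, hc1, hgreedy⟩ := hc.2 p hpm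
      set r : KSet X k := Function.update (o p) y none with hr
      have hry : r y = none := Function.update_self y none (o p)
      have hle : KSet.le (c p) r := by
        intro z j hz
        have hzy : z ≠ y := by rintro rfl; rw [hy] at hz; cases hz
        rw [hr, Function.update_of_ne hzy, ho', hz]
      have hopy : o p y = v y := by rw [ho', hy]
      have hsucc : o (p + 1) = KSet.add r y i := by
        funext z
        by_cases hz : z = y
        · subst hz
          rw [ho', hc1]
          simp [KSet.add, Function.update_self]
        · rw [ho', hc1]
          simp only [KSet.add, Function.update_of_ne hz]
          rw [hr, Function.update_of_ne hz, ho']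
      have hcm : g (c (p+1)) - g (c p) = marg g (c p) y i := by
        rw [hc1]; simp [marg]
      have hri : 0 ≤ marg g r y i := marg_nonneg hmono r y i hry
      have hci : 0 ≤ marg g (c p) y i := marg_nonneg hmono (c p) y i hy
      cases hvy : v y with
      | none =>
        have hop : o p = r := by
          funext z
          by_cases hz : z = y
          · subst hz; rw [hry, hopy, hvy]
          · rw [hr, Function.update_of_ne hz]
        have : g (o p) ≤ g (o (p+1)) := by
          rw [hop, hsucc]; simp only [marg] at hri; linarith
        linarith
      | some j =>
        have hop : o p = KSet.add r y j := by
          funext z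
          by_cases hz : z = y
          · subst hz
            rw [hopy, hvy]
            simp [KSet.add, Function.update_self]
          · simp only [KSet.add]
            rw [Function.update_of_ne hz, hr, Function.update_of_ne hz]
        have h1 : marg g r y j ≤ marg g (c p) y j := marg_le hsub (c p) r y j hle hry
        have h2 : marg g (c p) y j ≤ marg g (c p) y i := hgreedy j
        have : g (o p) - g (o (p+1)) ≤ marg g (c p) y i := by
          rw [hop, hsucc]
          simp only [marg] at h1 h2 hri ⊢
          linarith
        linarith
  have hkey := key m le_rfl
  rw [hc.1, hnorm] at hkey
  -- now bound g (o m)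
  rcases Nat.eq_zero_or_pos k with hk | hk
  · subst hk
    have hvb : v = KSet.bot X 0 := funext fun z => by
      cases h : v z with
      | none => rfl
      | some i => exact i.elim0
    have hob : o m = c m := by
      funext z
      rw [ho']
      cases h : c m z with
      | none => rw [hvb]; rfl
      | some i => rfl
    rw [hob] at hkey
    have hsum : ∑ y ∈ Finset.univ.filter (fun y => v y ≠ none ∧ c m y = none),
        (v y).elim 0 (fun i => marg g (c m) y i) = 0 := by
      apply Finset.sum_eq_zero
      intro y hy
      rw [hvb]
      rfl
    rw [hsum]
    linarith
  · set i₀ : Fin k := ⟨0, hk⟩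
    set D : Finset X := Finset.univ.filter (fun y => v y ≠ none ∧ c m y = none) with hD
    set f : X → Fin k := fun y => (v y).getD i₀ with hf
    have hDnone : ∀ y ∈ D, c m y = none := by
      intro y hy
      exact (Finset.mem_filter.1 hy).2.2
    have hoext : o m = kextend (c m) D f := by
      funext z
      rw [ho']
      cases h : c m z with
      | none =>
        cases hvz : v z with
        | none =>
          have : z ∉ D := by simp [hD, hvz, h]
          simp [kextend, this, h]
        | some j =>
          have hzD : z ∈ D := by simp [hD, hvz, h]
          simp [kextend, hzD, hf, hvz]
      | some j =>
        have : z ∉ D := by simp [hD, h]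
        simp [kextend, this, h]
    have hbound := g_kextend_le hsub hmono (c m) D f hDnone
    have hsum : ∑ y ∈ D, marg g (c m) y (f y) =
        ∑ y ∈ D, (v y).elim 0 (fun i => marg g (c m) y i) := by
      apply Finset.sum_congr rfl
      intro y hy
      obtain ⟨_, hvy, _⟩ := Finset.mem_filter.1 hy
      cases h : v y with
      | none => exact absurd h hvy
      | some j => simp [hf, h]
    rw [hoext] at hkey
    rw [← hsum]
    linarith
end

section
/- Let k ≥ 2, let g : (k+1)^𝒳 → ℝ≥0 be a normalized k-submodular function (not necessarily monotone), let 𝟎 = x⁰ ⊑ x¹ ⊑ … ⊑ xᵐ = 𝐱 be a greedy chain for g, let τ ∈ ℝ, and let v be a k-set with g(v) ≥ τ. Then τ − g(𝐱) ≤ 2·g(𝐱) + Σ_{y ∈ E(v) ∖ E(𝐱)} Δ_{y, v(y)} g(𝐱). -/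
section Aux

variable {X : Type*} [DecidableEq X] {k : ℕ} {g : KSet X k → ℝ}

lemma meet_add_left (s t : KSet X k) (x : X) (i : Fin k)
    (hst : KSet.le s t) (hx : t x = none) :
    KSet.meet (KSet.add s x i) t = s := by
  funext y
  by_cases hy : y = x
  · subst hy
    have hs : s y = none := by
      cases hsy : s y with
      | none => rfl
      | some j => have := hst y j hsy; rw [this] at hx; exact absurd hx (by simp)
    simp [KSet.meet, KSet.add, hx, hs]
  · simp only [KSet.meet, KSet.add, Function.update_of_ne hy]
    cases hsy : s y with
    | none => cases hty : t y <;> simp [hty]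
    | some j => have := hst y j hsy; simp [this]

lemma join_add_left (s t : KSet X k) (x : X) (i : Fin k)
    (hst : KSet.le s t) (hx : t x = none) :
    KSet.join (KSet.add s x i) t = KSet.add t x i := by
  funext y
  by_cases hy : y = x
  · subst hy
    simp [KSet.join, KSet.add, hx]
  · simp only [KSet.join, KSet.add, Function.update_of_ne hy]
    cases hsy : s y with
    | none => cases hty : t y <;> simp [hty]
    | some j => have := hst y j hsy; simp [this]

/-- Orthant submodularity. -/
lemma marg_antitone (hsub : KSubmodular g) {s t : KSet X k} (hst : KSet.le s t)
    (x : X) (hx : t x = none) (i : Fin k) :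
    marg g t x i ≤ marg g s x i := by
  have h := hsub (KSet.add s x i) t
  rw [meet_add_left s t x i hst hx, join_add_left s t x i hst hx] at h
  unfold marg
  linarith

/-- Pairwise monotonicity. -/
lemma marg_pairwise (hsub : KSubmodular g) (s : KSet X k) (x : X) (hx : s x = none)
    {i j : Fin k} (hij : i ≠ j) : 0 ≤ marg g s x i + marg g s x j := by
  have h := hsub (KSet.add s x i) (KSet.add s x j)
  have hmeet : KSet.meet (KSet.add s x i) (KSet.add s x j) = s := by
    funext y
    by_cases hy : y = x
    · subst hy; simp [KSet.meet, KSet.add, hx, hij]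
    · simp only [KSet.meet, KSet.add, Function.update_of_ne hy]
      cases hsy : s y <;> simp [hsy]
  have hjoin : KSet.join (KSet.add s x i) (KSet.add s x j) = s := by
    funext y
    by_cases hy : y = x
    · subst hy; simp [KSet.join, KSet.add, hx, hij]
    · simp only [KSet.join, KSet.add, Function.update_of_ne hy]
      cases hsy : s y <;> simp [hsy]
  rw [hmeet, hjoin] at h
  unfold marg
  linarith

lemma add_set_bound (hsub : KSubmodular g) (s v : KSet X k) (F : Finset X)
    (hF : ∀ y ∈ F, s y = none ∧ v y ≠ none) :
    g (fun y => if y ∈ F then v y else s y) ≤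
      g s + ∑ y ∈ F, (v y).elim 0 (fun i => marg g s y i) := by
  classical
  induction F using Finset.induction_on with
  | empty => simp
  | @insert z F' hz ih =>
    obtain ⟨hsz, hvz⟩ := hF z (Finset.mem_insert_self z F')
    obtain ⟨i, hi⟩ := Option.ne_none_iff_exists'.mp hvz
    have hF' : ∀ y ∈ F', s y = none ∧ v y ≠ none :=
      fun y hy => hF y (Finset.mem_insert_of_mem hy)
    set sF : KSet X k := fun y => if y ∈ F' then v y else s y with hsF
    have hle : KSet.le s sF := by
      intro y j hjy
      by_cases hy : y ∈ F'
      · exact absurd (hF' y hy).1 (by simp [hjy])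
      · simpa [hsF, hy] using hjy
    have hsFz : sF z = none := by simp [hsF, hz, hsz]
    have heq : (fun y => if y ∈ insert z F' then v y else s y) = KSet.add sF z i := by
      funext y
      by_cases hy : y = z
      · subst hy; simp [KSet.add, hi]
      · simp [KSet.add, Function.update_of_ne hy, hsF, Finset.mem_insert, hy]
    have hmarg : marg g sF z i ≤ marg g s z i := marg_antitone hsub hle z hsFz i
    have hgadd : g (KSet.add sF z i) = g sF + marg g sF z i := by unfold marg; ring
    rw [heq, hgadd, Finset.sum_insert hz, hi]
    have := ih hF'
    have helim : (some i : Option (Fin k)).elim (0:ℝ) (fun j => marg g s z j) = marg g s z i := rfl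
    rw [helim]
    linarith

end Aux

/-- For `k ≥ 2`, a (not necessarily monotone) normalized
`k`-submodular `g`, a greedy chain `𝟎 = x⁰ ⊑ … ⊑ xᵐ = 𝐱`, `τ : ℝ`, and a
`k`-set `v` with `g v ≥ τ`:
`τ - g 𝐱 ≤ 2 * g 𝐱 + ∑_{y ∈ E(v) \ E(𝐱)} Δ_{y, v(y)} g (𝐱)`. -/
theorem tau_sub_le_nonmonotone {X : Type*} [Fintype X] [DecidableEq X] {k : ℕ} (hk : 2 ≤ k)
    (g : KSet X k → ℝ) (hnn : ∀ s : KSet X k, 0 ≤ g s) (hsub : KSubmodular g)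
    (hnorm : g (KSet.bot X k) = 0)
    (m : ℕ) (c : ℕ → KSet X k) (hc : GreedyChain g m c)
    (τ : ℝ) (v : KSet X k) (hv : τ ≤ g v) :
    τ - g (c m) ≤ 2 * g (c m) +
      ∑ y ∈ Finset.univ.filter (fun y => v y ≠ none ∧ c m y = none),
        (v y).elim 0 (fun i => marg g (c m) y i) := by
  classical
  obtain ⟨hc0, hcstep⟩ := hc
  haveI : Nontrivial (Fin k) := Fin.nontrivial_iff_two_le.mpr hk
  -- hybrid sequence
  set o : ℕ → KSet X k := fun p y => (c p y).elim (v y) some with ho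
  have ho0 : o 0 = v := by
    funext y; simp [ho, hc0, KSet.bot]
  -- per-step inequality
  have step : ∀ p, p < m → g (o p) ≤ g (o (p + 1)) + 2 * (g (c (p + 1)) - g (c p)) := by
    intro p hpm
    obtain ⟨xp, ip, hxp, hcp1, hgreedy⟩ := hcstep p hpm
    have hle_cp_op : KSet.le (c p) (o p) := by
      intro y j hjy; simp [ho, hjy]
    have hop_eq : ∀ y, y ≠ xp → o (p + 1) y = o p y := by
      intro y hy
      simp [ho, hcp1, KSet.add, Function.update_of_ne hy]
    have hgain : 0 ≤ marg g (c p) xp ip := by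
      obtain ⟨j, hj⟩ := exists_ne ip
      have h1 := marg_pairwise hsub (c p) xp hxp hj.symm
      have h2 := hgreedy j
      linarith
    cases hvxp : v xp with
    | none =>
      -- o (p+1) = add (o p) xp ip
      have hopxp : o p xp = none := by simp [ho, hxp, hvxp]
      have heq : o (p + 1) = KSet.add (o p) xp ip := by
        funext y
        by_cases hy : y = xp
        · subst hy; simp [ho, hcp1, KSet.add]
        · rw [hop_eq y hy]; simp [KSet.add, Function.update_of_ne hy]
      obtain ⟨j, hj⟩ := exists_ne ip
      have h1 := marg_pairwise hsub (o p) xp hopxp hj.symm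
      have h2 := marg_antitone hsub hle_cp_op xp hopxp j
      have h3 := hgreedy j
      have h4 : g (o (p + 1)) = g (o p) + marg g (o p) xp ip := by
        rw [heq]; unfold marg; ring
      have h5 : marg g (c p) xp ip = g (c (p + 1)) - g (c p) := by
        rw [hcp1]; unfold marg; ring
      linarith
    | some iv =>
      by_cases hiv : iv = ip
      · have heq : o (p + 1) = o p := by
          funext y
          by_cases hy : y = xp
          · subst hy; simp [ho, hcp1, KSet.add, hvxp, hiv, hxp]
          · exact hop_eq y hy
        have h5 : marg g (c p) xp ip = g (c (p + 1)) - g (c p) := by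
          rw [hcp1]; unfold marg; ring
        rw [heq]; linarith
      · -- conflicting positions
        set s : KSet X k := fun y => if y = xp then none else o p y with hs
        have hsxp : s xp = none := by simp [hs]
        have hle_cp_s : KSet.le (c p) s := by
          intro y j hjy
          by_cases hy : y = xp
          · subst hy; rw [hxp] at hjy; exact absurd hjy (by simp)
          · simp only [hs, if_neg hy]; exact hle_cp_op y j hjy
        have hop : o p = KSet.add s xp iv := by
          funext y
          by_cases hy : y = xp
          · subst hy; simp [KSet.add, hs, ho, hxp, hvxp]
          · simp [KSet.add, Function.update_of_ne hy, hs, hy]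
        have hop1 : o (p + 1) = KSet.add s xp ip := by
          funext y
          by_cases hy : y = xp
          · subst hy; simp [KSet.add, ho, hcp1]
          · rw [hop_eq y hy]
            simp [KSet.add, Function.update_of_ne hy, hs, hy]
        have h1 := marg_pairwise hsub s xp hsxp hiv
        have h2 := marg_antitone hsub hle_cp_s xp hsxp iv
        have h3 := hgreedy iv
        have h5 : marg g (c p) xp ip = g (c (p + 1)) - g (c p) := by
          rw [hcp1]; unfold marg; ring
        have h6 : g (o p) = g s + marg g s xp iv := by rw [hop]; unfold marg; ring
        have h7 : g (o (p + 1)) = g s + marg g s xp ip := by rw [hop1]; unfold marg; ring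
        linarith
  -- telescoping
  have key : ∀ p, p ≤ m → g v ≤ g (o p) + 2 * g (c p) := by
    intro p
    induction p with
    | zero => intro _; rw [ho0, hc0, hnorm]; linarith
    | succ p ih =>
      intro hpm
      have h1 := step p (by omega)
      have h2 := ih (by omega)
      linarith
  -- final bound via add_set_bound
  set F : Finset X := Finset.univ.filter (fun y => v y ≠ none ∧ c m y = none) with hF
  have hFcond : ∀ y ∈ F, c m y = none ∧ v y ≠ none := by
    intro y hy
    simp only [hF, Finset.mem_filter] at hy
    exact ⟨hy.2.2, hy.2.1⟩
  have hom : o m = fun y => if y ∈ F then v y else c m y := by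
    funext y
    by_cases hy : y ∈ F
    · have := hFcond y hy
      simp [ho, this.1, hy]
    · simp only [hF, Finset.mem_filter, Finset.mem_univ, true_and, not_and_or] at hy
      rcases hy with hy | hy
      · push_neg at hy
        have : v y = none := hy
        cases hcy : c m y with
        | none => simp [ho, hcy, this, hF, Finset.mem_filter, hcy]
        | some j => simp [ho, hcy, hF, Finset.mem_filter, this]
      · obtain ⟨j, hj⟩ := Option.ne_none_iff_exists'.mp hy
        simp [ho, hj, hF, Finset.mem_filter]
  have hbound := add_set_bound hsub (c m) v F hFcond
  rw [← hom] at hbound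
  have hkey := key m le_rfl
  linarith
end

section
/- Let k ≥ 2, let g : (k+1)^𝒳 → ℝ≥0 be a normalized k-submodular function (not necessarily monotone), w : 𝒳 → ℝ≥0 a weight function, ε ∈ (0,1], τ > 0, θ ≥ 0, let 𝟎 = x⁰ ⊑ x¹ ⊑ … ⊑ xᵐ = 𝐱 be a greedy chain for g, and let v be a k-set with g(v) ≥ τ and θ·w(v) ≤ ε·τ. Suppose that for every y ∈ E(v) ∖ E(𝐱) there is a k-set s_y ⊑ 𝐱 with y ∉ E(s_y) and max_{i∈[k]} Δ_{y,i}g(s_y) ≤ θ·w(y). Then g(𝐱) ≥ (1−ε)τ/3. -/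
section Helpers

variable {X : Type*} [DecidableEq X] {k : ℕ} {g : KSet X k → ℝ}

/-- Orthant submodularity: marginals decrease along `⊑`. -/
lemma marg_le_of_le (hsub : KSubmodular g) {s t : KSet X k} (hst : KSet.le s t)
    {x : X} (hsx : s x = none) (htx : t x = none) (i : Fin k) :
    marg g t x i ≤ marg g s x i := by
  have hmeet : KSet.meet (KSet.add s x i) t = s := by
    funext y
    by_cases hy : y = x
    · subst hy
      simp [KSet.meet, KSet.add, htx, hsx]
    · simp only [KSet.meet, KSet.add, Function.update_of_ne hy]
      cases hsy : s y with
      | none =>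
        cases hty : t y with
        | none => simp
        | some j => simp
      | some j =>
        have := hst y j hsy
        simp [this]
  have hjoin : KSet.join (KSet.add s x i) t = KSet.add t x i := by
    funext y
    by_cases hy : y = x
    · subst hy
      simp [KSet.join, KSet.add, htx]
    · simp only [KSet.join, KSet.add, Function.update_of_ne hy]
      cases hsy : s y with
      | none => simp [KSet.join]
      | some j =>
        have := hst y j hsy
        simp [KSet.join, this]
  have h := hsub (KSet.add s x i) t
  rw [hmeet, hjoin] at h
  simp only [marg]
  linarith

/-- Pairwise monotonicity. -/
lemma pairwise_mono (hsub : KSubmodular g) {s : KSet X k} {x : X} (hsx : s x = none)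
    {i j : Fin k} (hij : i ≠ j) :
    0 ≤ marg g s x i + marg g s x j := by
  have hmeet : KSet.meet (KSet.add s x i) (KSet.add s x j) = s := by
    funext y
    by_cases hy : y = x
    · subst hy; simp [KSet.meet, KSet.add, hsx, hij]
    · simp [KSet.meet, KSet.add, Function.update_of_ne hy]
  have hjoin : KSet.join (KSet.add s x i) (KSet.add s x j) = s := by
    funext y
    by_cases hy : y = x
    · subst hy; simp [KSet.join, KSet.add, hij, hsx]
    · simp only [KSet.join, KSet.add, Function.update_of_ne hy]
      cases hsy : s y <;> simp [KSet.join]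
  have h := hsub (KSet.add s x i) (KSet.add s x j)
  rw [hmeet, hjoin] at h
  simp only [marg]
  linarith

end Helpers

/-- The hybrid sequence: `c p` overwriting `v`. -/
def hybrid {X : Type*} {k : ℕ} (c : ℕ → KSet X k) (v : KSet X k) (p : ℕ) : KSet X k :=
  fun y => match c p y with
  | some i => some i
  | none => v y

/-- Remove a finite set of elements from a `k`-set. -/
def remv {X : Type*} [DecidableEq X] {k : ℕ} (b : KSet X k) (F : Finset X) : KSet X k :=
  fun y => if y ∈ F then none else b y

/-- Non-monotone good-elements bound: for `k ≥ 2`, a (not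
necessarily monotone) normalized `k`-submodular `g`, weights `w ≥ 0`,
`ε ∈ (0,1]`, `τ > 0`, `θ ≥ 0`, a greedy chain ending in `𝐱 = c m`, and a
`k`-set `v` with `g v ≥ τ` and `θ·w(v) ≤ ε·τ`, if every `y ∈ E(v) \ E(𝐱)`
admits a `k`-set `s_y ⊑ 𝐱` with `y ∉ E(s_y)` and
`max_{i ∈ [k]} Δ_{y,i} g (s_y) ≤ θ·w(y)`, then `g 𝐱 ≥ (1-ε)τ/3`. -/
theorem good_elements_nonmonotone {X : Type*} [Fintype X] [DecidableEq X] {k : ℕ} (hk : 2 ≤ k)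
    (g : KSet X k → ℝ) (hnn : ∀ s : KSet X k, 0 ≤ g s) (hsub : KSubmodular g)
    (hnorm : g (KSet.bot X k) = 0)
    (w : X → ℝ) (hw : ∀ x, 0 ≤ w x)
    (ε τ θ : ℝ) (hε0 : 0 < ε) (hε1 : ε ≤ 1) (hτ : 0 < τ) (hθ : 0 ≤ θ)
    (m : ℕ) (c : ℕ → KSet X k) (hc : GreedyChain g m c)
    (v : KSet X k) (hgv : τ ≤ g v) (hwv : θ * wtot w v ≤ ε * τ)
    (hgood : ∀ y : X, v y ≠ none → c m y = none →
      ∃ s : KSet X k, KSet.le s (c m) ∧ s y = none ∧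
        ∀ i : Fin k, marg g s y i ≤ θ * w y) :
    (1 - ε) * τ / 3 ≤ g (c m) := by
  classical
  obtain ⟨hc0, hstep⟩ := hc
  haveI : Nontrivial (Fin k) := Fin.nontrivial_iff_two_le.mpr hk
  have hgc0 : g (c 0) = 0 := by rw [hc0]; exact hnorm
  have hyb0 : hybrid c v 0 = v := by
    funext y; simp [hybrid, hc0, KSet.bot]
  have hle_c_hyb : ∀ p, KSet.le (c p) (hybrid c v p) := by
    intro p y i hyi; simp [hybrid, hyi]
  -- step bound for the hybrid sequence
  have hstepbound : ∀ p, p < m →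
      g (hybrid c v p) - g (hybrid c v (p + 1)) ≤ 2 * (g (c (p + 1)) - g (c p)) := by
    intro p hp
    obtain ⟨xp, ip, hxnone, hcadd, hmax⟩ := hstep p hp
    set t : KSet X k := Function.update (hybrid c v p) xp none with ht
    have htx : t xp = none := by simp [ht]
    have hct : KSet.le (c p) t := by
      intro y i hyi
      have hy : y ≠ xp := by rintro rfl; rw [hxnone] at hyi; exact absurd hyi (by simp)
      rw [ht, Function.update_of_ne hy]
      exact hle_c_hyb p y i hyi
    obtain ⟨j', hj'⟩ := exists_ne ip
    have hgain0 : marg g (c p) xp j' ≤ marg g (c p) xp ip := hmax j'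
    have hpm : 0 ≤ marg g (c p) xp ip + marg g (c p) xp j' :=
      pairwise_mono hsub hxnone (Ne.symm hj')
    have hgain_nonneg : 0 ≤ marg g (c p) xp ip := by linarith
    have hmarg_eq : marg g (c p) xp ip = g (c (p + 1)) - g (c p) := by
      rw [hcadd]; rfl
    have hhyb1 : hybrid c v (p + 1) = KSet.add t xp ip := by
      funext y
      by_cases hy : y = xp
      · subst hy
        simp [hybrid, hcadd, KSet.add, ht]
      · simp only [hybrid, hcadd, KSet.add, Function.update_of_ne hy, ht]
    have h1 : marg g t xp j' ≤ marg g (c p) xp j' := marg_le_of_le hsub hct hxnone htx j'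
    have h2 : 0 ≤ marg g t xp ip + marg g t xp j' := pairwise_mono hsub htx (Ne.symm hj')
    cases hvx : v xp with
    | none =>
      have hhybp : hybrid c v p = t := by
        funext y
        by_cases hy : y = xp
        · subst hy; simp [hybrid, hxnone, hvx, ht]
        · rw [ht, Function.update_of_ne hy]
      rw [hhybp, hhyb1]
      simp only [marg] at h1 h2 hgain0 hgain_nonneg hmarg_eq
      linarith
    | some j =>
      have hhybp : hybrid c v p = KSet.add t xp j := by
        funext y
        by_cases hy : y = xp
        · subst hy; simp [hybrid, hxnone, hvx, KSet.add, ht]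
        · simp only [KSet.add, Function.update_of_ne hy, ht]
      by_cases hjip : j = ip
      · subst hjip
        rw [hhybp, hhyb1]
        simp only [marg] at hgain_nonneg hmarg_eq
        linarith
      · have h3 : marg g t xp j ≤ marg g (c p) xp j := marg_le_of_le hsub hct hxnone htx j
        have h4 : marg g (c p) xp j ≤ marg g (c p) xp ip := hmax j
        have h5 : 0 ≤ marg g t xp ip + marg g t xp j :=
          pairwise_mono hsub htx (Ne.symm hjip)
        rw [hhybp, hhyb1]
        simp only [marg] at h3 h4 h5 hgain_nonneg hmarg_eq
        linarith
  -- telescoping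
  have htel : ∀ n, n ≤ m → g v - g (hybrid c v n) ≤ 2 * g (c n) := by
    intro n
    induction n with
    | zero =>
      intro _
      rw [hyb0, hgc0]
      simp
    | succ n ih =>
      intro hn
      have h1 := ih (Nat.le_of_succ_le hn)
      have h2 := hstepbound n hn
      linarith
  -- removal phase
  set D : Finset X := Finset.univ.filter (fun y => c m y = none ∧ v y ≠ none) with hD
  have hremD : remv (hybrid c v m) D = c m := by
    funext y
    by_cases hy : y ∈ D
    · have hmem := (Finset.mem_filter.mp hy).2
      simp [remv, hy, hmem.1]
    · simp only [remv, if_neg hy]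
      cases hcy : c m y with
      | some i => simp [hybrid, hcy]
      | none =>
        have hvy : v y = none := by
          by_contra hvy
          exact hy (Finset.mem_filter.mpr ⟨Finset.mem_univ y, hcy, hvy⟩)
        simp [hybrid, hcy, hvy]
  have hrem : ∀ F : Finset X, F ⊆ D →
      g (hybrid c v m) - θ * ∑ y ∈ F, w y ≤ g (remv (hybrid c v m) F) := by
    intro F
    induction F using Finset.induction_on with
    | empty =>
      intro _
      have : remv (hybrid c v m) ∅ = hybrid c v m := by funext y; simp [remv]
      rw [this]
      simp
    | @insert a F ha ih =>
      intro hsub'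
      have haD : a ∈ D := hsub' (Finset.mem_insert_self a F)
      have hFD : F ⊆ D := fun y hy => hsub' (Finset.mem_insert_of_mem hy)
      obtain ⟨hcma, hva⟩ := (Finset.mem_filter.mp haD).2
      obtain ⟨j, hj⟩ := Option.ne_none_iff_exists'.mp hva
      obtain ⟨s, hsle, hsa, hsmarg⟩ := hgood a hva hcma
      have hrins_a : remv (hybrid c v m) (insert a F) a = none := by simp [remv]
      have hs_le_rins : KSet.le s (remv (hybrid c v m) (insert a F)) := by
        intro y i hyi
        have hcy := hsle y i hyi
        have hyD : y ∉ D := by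
          intro hyD
          rw [(Finset.mem_filter.mp hyD).2.1] at hcy
          exact absurd hcy (by simp)
        have hyF : y ∉ insert a F := fun h => hyD (hsub' h)
        simp only [remv, if_neg hyF]
        simp [hybrid, hcy]
      have hremF_eq : remv (hybrid c v m) F
          = KSet.add (remv (hybrid c v m) (insert a F)) a j := by
        funext y
        by_cases hy : y = a
        · subst hy
          simp [remv, ha, KSet.add, hybrid, hcma, hj]
        · have hmemiff : (y ∈ insert a F) ↔ (y ∈ F) := by
            simp [Finset.mem_insert, hy]
          simp [remv, KSet.add, Function.update_of_ne hy, hmemiff]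
      have hm1 : marg g (remv (hybrid c v m) (insert a F)) a j ≤ marg g s a j :=
        marg_le_of_le hsub hs_le_rins hsa hrins_a j
      have hm2 : marg g s a j ≤ θ * w a := hsmarg j
      have hsum : ∑ y ∈ insert a F, w y = w a + ∑ y ∈ F, w y := Finset.sum_insert ha
      have hih := ih hFD
      rw [hremF_eq] at hih
      simp only [marg] at hm1 hm2
      rw [hsum]
      linarith
  have hD_le : (∑ y ∈ D, w y) ≤ wtot w v := by
    unfold wtot
    apply Finset.sum_le_sum_of_subset_of_nonneg
    · intro y hy
      exact Finset.mem_filter.mpr ⟨Finset.mem_univ y, (Finset.mem_filter.mp hy).2.2⟩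
    · intro y _ _
      exact hw y
  have hfin := hrem D (Finset.Subset.refl D)
  rw [hremD] at hfin
  have h1 : θ * ∑ y ∈ D, w y ≤ ε * τ :=
    le_trans (mul_le_mul_of_nonneg_left hD_le hθ) hwv
  have h2 := htel m le_rfl
  linarith
end

section
/- (Lemma 4, monotone case) Let g : (k+1)^𝒳 → ℝ≥0 be a monotone normalized k-submodular function, w : 𝒳 → ℝ≥0 with w(x) > 0 for all x ∈ 𝒳, ε ∈ (0,1], τ > 0 and W > 0, and let v be a k-set with g(v) ≥ τ and w(v) ≤ W. Set θ = ετ/W and A = ((3−ε)/(2ε))·W. Assume 𝒳 contains no big element, i.e., every x ∈ 𝒳 with w(x) ≤ A satisfies max_{i∈[k]} g((x,i)) < τ. Let 𝟎 = x⁰ ⊑ x¹ ⊑ … ⊑ xᵐ = 𝐱 be a greedy chain for g in which every added pair satisfies Δ_{x_p,i_p}g(xᵖ⁻¹) ≥ θ·w(x_p), and suppose that for every y ∈ E(v) ∖ E(𝐱) there is an index p_y ∈ {0,…,m} such that either max_{i∈[k]} Δ_{y,i}g(x^{p_y}) < θ·w(y), or both max_{i∈[k]} Δ_{y,i}g(x^{p_y})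 ≥ θ·w(y) and w(x^{p_y}) + w(y) > A. Then g(𝐱) ≥ (1−ε)τ/2. -/
namespace Lemma4Aux

variable {X : Type*} [DecidableEq X] {k : ℕ}

lemma le_refl' (s : KSet X k) : KSet.le s s := fun _ _ h => h

lemma le_trans' {s t u : KSet X k} (h1 : KSet.le s t) (h2 : KSet.le t u) : KSet.le s u :=
  fun x i h => h2 x i (h1 x i h)

lemma le_none {s t : KSet X k} (h : KSet.le s t) {y : X} (hy : t y = none) : s y = none := by
  cases hs : s y with
  | none => rfl
  | some j => have := h y j hs; rw [hy] at this; cases this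

lemma add_apply (s : KSet X k) (x : X) (i : Fin k) (z : X) :
    KSet.add s x i z = if z = x then some i else s z := by
  simp [KSet.add, Function.update_apply]

lemma le_add {s : KSet X k} {x : X} (hx : s x = none) (i : Fin k) :
    KSet.le s (KSet.add s x i) := by
  intro z j hz
  rw [add_apply]
  split
  · next h => subst h; rw [hx] at hz; cases hz
  · exact hz

lemma marg_mono {g : KSet X k → ℝ} (hsub : KSubmodular g) {s t : KSet X k}
    (hst : KSet.le s t) {y : X} (hy : t y = none) (i : Fin k) :
    marg g t y i ≤ marg g s y i := by
  have hsy : s y = none := le_none hst hy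
  have hmeet : KSet.meet (KSet.add s y i) t = s := by
    funext z
    unfold KSet.meet
    rw [add_apply]
    by_cases hz : z = y
    · subst hz; simp [hy, hsy]
    · simp only [if_neg hz]
      cases h : s z with
      | none => cases h' : t z <;> simp
      | some j => rw [hst z j h]; simp
  have hjoin : KSet.join (KSet.add s y i) t = KSet.add t y i := by
    funext z
    unfold KSet.join
    rw [add_apply, add_apply]
    by_cases hz : z = y
    · subst hz; simp [hy]
    · simp only [if_neg hz]
      cases h : s z with
      | none => simp
      | some j => rw [hst z j h]; simp
  have := hsub (KSet.add s y i) t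
  rw [hmeet, hjoin] at this
  unfold marg
  linarith

lemma wtot_bot {X : Type*} [Fintype X] (w : X → ℝ) : wtot w (KSet.bot X k) = 0 := by
  simp [wtot, KSet.bot]

lemma wtot_add {X : Type*} [Fintype X] [DecidableEq X] (w : X → ℝ) (s : KSet X k) {x : X}
    (hx : s x = none) (i : Fin k) :
    wtot w (KSet.add s x i) = wtot w s + w x := by
  unfold wtot
  have hset : Finset.univ.filter (fun z => KSet.add s x i z ≠ none)
      = insert x (Finset.univ.filter (fun z => s z ≠ none)) := by
    ext z
    simp only [Finset.mem_filter, Finset.mem_insert, Finset.mem_univ, true_and]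
    rw [add_apply]
    by_cases hz : z = x
    · subst hz; simp
    · simp [hz]
  rw [hset, Finset.sum_insert (by simp [hx])]
  ring

/-- `override s t`: agrees with `s` wherever `s` is assigned, with `t` elsewhere. -/
def override (s t : KSet X k) : KSet X k :=
  fun z => match s z with | some i => some i | none => t z

lemma override_some {s t : KSet X k} {z : X} {i : Fin k} (h : s z = some i) :
    override s t z = some i := by simp [override, h]

lemma override_none {s t : KSet X k} {z : X} (h : s z = none) :
    override s t z = t z := by simp [override, h]

lemma le_override (s t : KSet X k) : KSet.le s (override s t) :=
  fun _ i h => override_some h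

end Lemma4Aux

/-- **Lemma 4, monotone case.** Suppose `g` is monotone
normalized `k`-submodular, `w > 0`, `ε ∈ (0,1]`, `τ > 0`, `W > 0`, `v` is a
`k`-set with `g v ≥ τ` and `w(v) ≤ W`, `θ = ετ/W`, `A = ((3-ε)/(2ε))·W`, and
the ground set contains no big element.  If `𝟎 = x⁰ ⊑ … ⊑ xᵐ = 𝐱` is a greedy
chain in which every added pair passes the threshold `Δ_{x_p,i_p}g(xᵖ⁻¹) ≥ θ·w(x_p)`,
and every `y ∈ E(v) \ E(𝐱)` has an index `p_y ≤ m` at which `y` is good or bad,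
then `g 𝐱 ≥ (1-ε)τ/2`. -/
theorem lemma4_monotone {X : Type*} [Fintype X] [DecidableEq X] {k : ℕ}
    (g : KSet X k → ℝ) (hnn : ∀ s : KSet X k, 0 ≤ g s) (hsub : KSubmodular g)
    (hmono : KMonotone g) (hnorm : g (KSet.bot X k) = 0)
    (w : X → ℝ) (hw : ∀ x, 0 < w x)
    (ε τ W : ℝ) (hε0 : 0 < ε) (hε1 : ε ≤ 1) (hτ : 0 < τ) (hW : 0 < W)
    (v : KSet X k) (hgv : τ ≤ g v) (hwv : wtot w v ≤ W)
    (θ A : ℝ) (hθ : θ = ε * τ / W) (hA : A = (3 - ε) / (2 * ε) * W)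
    (hnobig : ∀ x : X, w x ≤ A → ∀ i : Fin k, g (KSet.single x i) < τ)
    (m : ℕ) (c : ℕ → KSet X k) (h0 : c 0 = KSet.bot X k)
    (hchain : ∀ p, p < m → ∃ (xp : X) (ip : Fin k),
      c p xp = none ∧ c (p + 1) = KSet.add (c p) xp ip ∧
        (∀ i : Fin k, marg g (c p) xp i ≤ marg g (c p) xp ip) ∧
        θ * w xp ≤ marg g (c p) xp ip)
    (hout : ∀ y : X, v y ≠ none → c m y = none →
      ∃ p, p ≤ m ∧
        ((∀ i : Fin k, marg g (c p) y i < θ * w y) ∨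
          ((∃ i : Fin k, θ * w y ≤ marg g (c p) y i) ∧ A < wtot w (c p) + w y))) :
    (1 - ε) * τ / 2 ≤ g (c m) := by
  classical
  have hW0 : W ≠ 0 := ne_of_gt hW
  have hθpos : 0 < θ := by rw [hθ]; positivity
  have hθW : θ * W = ε * τ := by rw [hθ]; field_simp
  -- chain facts
  have hstep : ∀ p, p < m → KSet.le (c p) (c (p + 1)) := by
    intro p hp
    obtain ⟨xp, ip, hnone, heq, _, _⟩ := hchain p hp
    rw [heq]; exact Lemma4Aux.le_add hnone ip
  have hle : ∀ p q, p ≤ q → q ≤ m → KSet.le (c p) (c q) := by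
    intro p q
    induction q with
    | zero => intro hpq _; have : p = 0 := Nat.le_zero.mp hpq; subst this
              exact Lemma4Aux.le_refl' _
    | succ n ih =>
      intro hpq hqm
      rcases Nat.eq_or_lt_of_le hpq with h | h
      · subst h; exact Lemma4Aux.le_refl' _
      · exact Lemma4Aux.le_trans' (ih (by omega) (by omega)) (hstep n (by omega))
  have hgw : ∀ p, p ≤ m → θ * wtot w (c p) ≤ g (c p) := by
    intro p
    induction p with
    | zero => intro _; rw [h0, Lemma4Aux.wtot_bot, hnorm]; simp
    | succ n ih =>
      intro hpm
      obtain ⟨xp, ip, hnone, heq, _, hgain⟩ := hchain n (by omega)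
      have h1 := ih (by omega)
      have h2 : wtot w (c (n + 1)) = wtot w (c n) + w xp := by
        rw [heq]; exact Lemma4Aux.wtot_add w _ hnone ip
      have h3 : g (c (n + 1)) = g (c n) + marg g (c n) xp ip := by
        rw [heq]; unfold marg; ring
      rw [h2, h3, mul_add]; linarith
  by_cases hbad : ∃ y, v y ≠ none ∧ c m y = none ∧ ∃ p, p ≤ m ∧ A < wtot w (c p) + w y
  · -- bad case
    obtain ⟨y, hvy, hcy, p, hpm, hAlt⟩ := hbad
    have hwyW : w y ≤ W := by
      have h1 : w y ≤ wtot w v := by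
        apply Finset.single_le_sum (f := w) (fun x _ => (hw x).le)
        simp [hvy]
      linarith
    have h2 := hgw p hpm
    have h3 := hmono _ _ (hle p m hpm le_rfl)
    have h4 : θ * (A - w y) ≤ θ * wtot w (c p) :=
      mul_le_mul_of_nonneg_left (by linarith) hθpos.le
    have hθA : θ * A = (3 - ε) * τ / 2 := by
      rw [hθ, hA]; field_simp
    have h5 : θ * w y ≤ θ * W := mul_le_mul_of_nonneg_left hwyW hθpos.le
    have h6 : 0 ≤ (1 - ε) * τ := mul_nonneg (by linarith) hτ.le
    have e1 : θ * (A - w y) = θ * A - θ * w y := by ring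
    linarith
  · -- good case
    have hgood : ∀ y, v y ≠ none → c m y = none → ∀ i, marg g (c m) y i ≤ θ * w y := by
      intro y hvy hcy i
      obtain ⟨p, hpm, hcase⟩ := hout y hvy hcy
      rcases hcase with hg | hb
      · calc marg g (c m) y i ≤ marg g (c p) y i :=
              Lemma4Aux.marg_mono hsub (hle p m hpm le_rfl) hcy i
          _ ≤ θ * w y := (hg i).le
      · exact absurd ⟨y, hvy, hcy, p, hpm, hb.2⟩ hbad
    -- the override chain
    have ho0 : Lemma4Aux.override (c 0) v = v := by
      funext z
      rw [Lemma4Aux.override_none (by rw [h0]; rfl)]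
    have hkey : ∀ p, p ≤ m → g v ≤ g (Lemma4Aux.override (c p) v) + g (c p) := by
      intro p
      induction p with
      | zero => intro _; rw [ho0, h0, hnorm]; simp
      | succ n ih =>
        intro hpm
        obtain ⟨xp, ip, hnone, heq, hmax, hgain⟩ := hchain n (by omega)
        have ih' := ih (by omega)
        have hgc : g (c (n + 1)) = g (c n) + marg g (c n) xp ip := by
          rw [heq]; unfold marg; ring
        have ho1 : ∀ z, z ≠ xp →
            Lemma4Aux.override (c (n + 1)) v z = Lemma4Aux.override (c n) v z := by
          intro z hz
          have : c (n + 1) z = c n z := by rw [heq, Lemma4Aux.add_apply, if_neg hz]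
          unfold Lemma4Aux.override; rw [this]
        have ho2 : Lemma4Aux.override (c (n + 1)) v xp = some ip := by
          apply Lemma4Aux.override_some
          rw [heq, Lemma4Aux.add_apply, if_pos rfl]
        cases hv : v xp with
        | none =>
          have honx : Lemma4Aux.override (c n) v xp = none := by
            rw [Lemma4Aux.override_none hnone, hv]
          have heq2 : Lemma4Aux.override (c (n + 1)) v
              = KSet.add (Lemma4Aux.override (c n) v) xp ip := by
            funext z
            rw [Lemma4Aux.add_apply]
            by_cases hz : z = xp
            · subst hz; rw [if_pos rfl, ho2]
            · rw [if_neg hz, ho1 z hz]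
          have hmon : g (Lemma4Aux.override (c n) v)
              ≤ g (Lemma4Aux.override (c (n + 1)) v) := by
            rw [heq2]; exact hmono _ _ (Lemma4Aux.le_add honx ip)
          have hgain0 : 0 ≤ marg g (c n) xp ip :=
            le_trans (mul_nonneg hθpos.le (hw xp).le) hgain
          linarith
        | some j =>
          have honx : Lemma4Aux.override (c n) v xp = some j := by
            rw [Lemma4Aux.override_none hnone, hv]
          set r : KSet X k := Function.update (Lemma4Aux.override (c n) v) xp none with hr
          have hrx : r xp = none := by rw [hr, Function.update_self]
          have hrz : ∀ z, z ≠ xp → r z = Lemma4Aux.override (c n) v z := by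
            intro z hz; rw [hr, Function.update_of_ne hz]
          have hcr : KSet.le (c n) r := by
            intro z i hz
            have hzx : z ≠ xp := by
              rintro rfl; rw [hnone] at hz; cases hz
            rw [hrz z hzx]; exact Lemma4Aux.override_some hz
          have hon : Lemma4Aux.override (c n) v = KSet.add r xp j := by
            funext z
            rw [Lemma4Aux.add_apply]
            by_cases hz : z = xp
            · subst hz; rw [if_pos rfl, honx]
            · rw [if_neg hz, hrz z hz]
          have hon1 : Lemma4Aux.override (c (n + 1)) v = KSet.add r xp ip := by
            funext z
            rw [Lemma4Aux.add_apply]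
            by_cases hz : z = xp
            · subst hz; rw [if_pos rfl, ho2]
            · rw [if_neg hz, hrz z hz, ho1 z hz]
          have h1 : g (Lemma4Aux.override (c n) v) - g r = marg g r xp j := by
            rw [hon]; unfold marg; ring
          have h2 : marg g r xp j ≤ marg g (c n) xp j :=
            Lemma4Aux.marg_mono hsub hcr hrx j
          have h3 := hmax j
          have h4 : g r ≤ g (Lemma4Aux.override (c (n + 1)) v) := by
            rw [hon1]; exact hmono _ _ (Lemma4Aux.le_add hrx ip)
          linarith
    set D : Finset X := Finset.univ.filter (fun y => v y ≠ none ∧ c m y = none) with hD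
    have hins : ∀ T : Finset X, (∀ y ∈ T, v y ≠ none ∧ c m y = none) →
        g (fun z => if z ∈ T then v z else c m z) ≤ g (c m) + ∑ y ∈ T, θ * w y := by
      intro T
      induction T using Finset.induction_on with
      | empty => intro _; simp
      | @insert a T ha ih =>
        intro hT
        have hva : v a ≠ none := (hT a (by simp)).1
        have hca : c m a = none := (hT a (by simp)).2
        obtain ⟨ia, hia⟩ : ∃ i, v a = some i := Option.ne_none_iff_exists'.mp hva
        have ihT := ih (fun y hy => hT y (by simp [hy]))
        have hcu : KSet.le (c m) (fun z => if z ∈ T then v z else c m z) := by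
          intro z i hz
          by_cases hzT : z ∈ T
          · exact absurd hz (by rw [(hT z (by simp [hzT])).2]; simp)
          · simp only [if_neg hzT]; exact hz
        have hua : (fun z => if z ∈ T then v z else c m z) a = none := by
          simp only [if_neg ha]; exact hca
        have hnew : (fun z => if z ∈ insert a T then v z else c m z)
            = KSet.add (fun z => if z ∈ T then v z else c m z) a ia := by
          funext z
          rw [Lemma4Aux.add_apply]
          by_cases hz : z = a
          · subst hz; simp [hia]
          · simp [hz, Finset.mem_insert]
        have hmarg : marg g (fun z => if z ∈ T then v z else c m z) a ia
            ≤ marg g (c m) a ia := Lemma4Aux.marg_mono hsub hcu hua ia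
        have hga : marg g (c m) a ia ≤ θ * w a := hgood a hva hca ia
        rw [hnew, Finset.sum_insert ha]
        have hex : g (KSet.add (fun z => if z ∈ T then v z else c m z) a ia)
            = g (fun z => if z ∈ T then v z else c m z)
              + marg g (fun z => if z ∈ T then v z else c m z) a ia := by
          unfold marg; ring
        linarith
    have homu : Lemma4Aux.override (c m) v
        = fun z => if z ∈ D then v z else c m z := by
      funext z
      rw [hD]
      simp only [Finset.mem_filter, Finset.mem_univ, true_and]
      cases h : c m z with
      | some j => rw [Lemma4Aux.override_some h]; simp [h]
      | none =>
        rw [Lemma4Aux.override_none h]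
        cases h' : v z with
        | none => simp [h, h']
        | some j => simp [h, h']
    have hDsum : ∑ y ∈ D, θ * w y ≤ ε * τ := by
      have h1 : ∑ y ∈ D, θ * w y = θ * ∑ y ∈ D, w y := by rw [Finset.mul_sum]
      have h2 : ∑ y ∈ D, w y ≤ wtot w v := by
        have : wtot w v = ∑ x ∈ Finset.univ.filter (fun x => v x ≠ none), w x := rfl
        rw [this]
        apply Finset.sum_le_sum_of_subset_of_nonneg
        · intro z hz
          rw [hD] at hz
          simp only [Finset.mem_filter, Finset.mem_univ, true_and] at hz ⊢
          exact hz.1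
        · intro z _ _; exact (hw z).le
      have h3 : θ * ∑ y ∈ D, w y ≤ θ * W :=
        mul_le_mul_of_nonneg_left (by linarith) hθpos.le
      rw [h1]; linarith
    have hfinal := hkey m le_rfl
    have hins' : g (fun z => if z ∈ D then v z else c m z)
        ≤ g (c m) + ∑ y ∈ D, θ * w y := by
      apply hins
      intro y hy
      rw [hD] at hy
      simpa using (Finset.mem_filter.mp hy).2
    rw [homu] at hfinal
    linarith
end

section
/- (Lemma 2, monotone case) Let g : (k+1)^𝒳 → ℝ≥0 be a monotone normalized k-submodular function, w : 𝒳 → ℝ>0 a positive weight function, τ > 0, W̄ > 0 and ε ∈ (0,1]. If the k-set 𝐬 returned by Algorithm 1 with inputs (τ, W̄, ε) contains a big element, then w(𝐬) ≤ ((3−ε)/(2ε))·W̄ and g(𝐬) ≥ τ. -/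
/-- A choice of position in `[k]` maximizing `f`. -/
noncomputable def argmaxFin {k : ℕ} [NeZero k] (f : Fin k → ℝ) : Fin k :=
  Classical.choose (Finset.exists_max_image Finset.univ f
    ⟨⟨0, Nat.pos_of_ne_zero (NeZero.ne k)⟩, Finset.mem_univ _⟩)

open Classical in
/-- One step of Algorithm 1, processing the arriving element `x` with current
solution `s`, threshold `τ`, density threshold `θ` and cost upper bound `A`:
if `x` is big (`w x ≤ A` and `max_i g((x,i)) ≥ τ`) then restart from `(x,i')`
with `i'` maximizing `g((x,i))`; otherwise add `(x,i')` with `i'` maximizing the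
marginal gain, provided `Δ_{x,i'}g(s)/w(x) ≥ θ` and `w(s) + w(x) ≤ A`. -/
noncomputable def alg1Step {X : Type*} [Fintype X] [DecidableEq X] {k : ℕ} [NeZero k]
    (g : KSet X k → ℝ) (w : X → ℝ) (τ θ A : ℝ) (s : KSet X k) (x : X) : KSet X k :=
  if w x ≤ A ∧ τ ≤ g (KSet.single x (argmaxFin fun i => g (KSet.single x i))) then
    KSet.single x (argmaxFin fun i => g (KSet.single x i))
  else if θ ≤ marg g s x (argmaxFin fun i => marg g s x i) / w x ∧ wtot w s + w x ≤ A then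
    KSet.add s x (argmaxFin fun i => marg g s x i)
  else s

/-- Algorithm 1: starting from `𝟎`, process the elements of the ground set in
their arrival order `order`. -/
noncomputable def alg1 {X : Type*} [Fintype X] [DecidableEq X] {k : ℕ} [NeZero k]
    (g : KSet X k → ℝ) (w : X → ℝ) (τ θ A : ℝ) (order : List X) : KSet X k :=
  order.foldl (alg1Step g w τ θ A) (KSet.bot X k)

/-- `x` is a big element: `w x ≤ A` and `max_{i ∈ [k]} g((x,i)) ≥ τ`. -/
def IsBig {X : Type*} [DecidableEq X] {k : ℕ} (g : KSet X k → ℝ) (w : X → ℝ)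
    (τ A : ℝ) (x : X) : Prop :=
  w x ≤ A ∧ ∃ i : Fin k, τ ≤ g (KSet.single x i)

lemma argmaxFin_spec {k : ℕ} [NeZero k] (f : Fin k → ℝ) (i : Fin k) :
    f i ≤ f (argmaxFin f) := by
  have h := Classical.choose_spec (Finset.exists_max_image Finset.univ f
    ⟨⟨0, Nat.pos_of_ne_zero (NeZero.ne k)⟩, Finset.mem_univ _⟩)
  exact h.2 i (Finset.mem_univ i)

lemma wtot_single {X : Type*} [Fintype X] [DecidableEq X] {k : ℕ}
    (w : X → ℝ) (x : X) (i : Fin k) : wtot w (KSet.single x i) = w x := by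
  unfold wtot
  have : Finset.filter (fun y => KSet.single x i y ≠ none) Finset.univ = {x} := by
    ext y
    simp [KSet.single]
  rw [this, Finset.sum_singleton]

lemma wtot_add_le {X : Type*} [Fintype X] [DecidableEq X] {k : ℕ}
    (w : X → ℝ) (hw : ∀ x, 0 ≤ w x) (s : KSet X k) (x : X) (i : Fin k) :
    wtot w (KSet.add s x i) ≤ wtot w s + w x := by
  unfold wtot
  have hsub : Finset.filter (fun y => KSet.add s x i y ≠ none) Finset.univ ⊆
      insert x (Finset.filter (fun y => s y ≠ none) Finset.univ) := by
    intro y hy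
    simp only [Finset.mem_filter, Finset.mem_univ, true_and, KSet.add] at hy
    by_cases h : y = x
    · simp [h]
    · have hy' : s y ≠ none := by
        have hy2 := (Finset.mem_filter.mp hy).2
        simpa [KSet.add, Function.update_of_ne h] using hy2
      simp [h, hy']
  have h1 : ∑ y ∈ Finset.filter (fun y => KSet.add s x i y ≠ none) Finset.univ, w y ≤
      ∑ y ∈ insert x (Finset.filter (fun y => s y ≠ none) Finset.univ), w y :=
    Finset.sum_le_sum_of_subset_of_nonneg hsub (fun _ _ _ => hw _)
  refine h1.trans ?_
  by_cases hx : x ∈ Finset.filter (fun y => s y ≠ none) Finset.univ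
  · rw [Finset.insert_eq_self.mpr hx]
    linarith [hw x]
  · rw [Finset.sum_insert hx]
    linarith

lemma alg1Step_preserves {X : Type*} [Fintype X] [DecidableEq X] {k : ℕ} [NeZero k]
    (g : KSet X k → ℝ) (w : X → ℝ) (hw : ∀ x, 0 < w x) (τ θ A : ℝ)
    (hθ : 0 < θ) (s : KSet X k) (x : X)
    (hQ : wtot w s ≤ A ∧ τ ≤ g s) :
    wtot w (alg1Step g w τ θ A s x) ≤ A ∧ τ ≤ g (alg1Step g w τ θ A s x) := by
  unfold alg1Step
  split_ifs with h1 h2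
  · rw [wtot_single]
    exact ⟨h1.1, h1.2⟩
  · constructor
    · exact (wtot_add_le w (fun y => (hw y).le) s x _).trans h2.2
    · have hm : θ * w x ≤ marg g s x (argmaxFin fun i => marg g s x i) :=
        (le_div_iff₀ (hw x)).mp h2.1
      have hm2 : θ * w x ≤ g (KSet.add s x (argmaxFin fun i => marg g s x i)) - g s := hm
      nlinarith [hQ.2, mul_pos hθ (hw x)]
  · exact hQ

lemma alg1Step_big {X : Type*} [Fintype X] [DecidableEq X] {k : ℕ} [NeZero k]
    (g : KSet X k → ℝ) (w : X → ℝ) (τ θ A : ℝ) (s : KSet X k) (x : X)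
    (hbig : IsBig g w τ A x) :
    wtot w (alg1Step g w τ θ A s x) ≤ A ∧ τ ≤ g (alg1Step g w τ θ A s x) := by
  obtain ⟨hwx, i, hi⟩ := hbig
  have hc : w x ≤ A ∧ τ ≤ g (KSet.single x (argmaxFin fun i => g (KSet.single x i))) :=
    ⟨hwx, hi.trans (argmaxFin_spec (fun i => g (KSet.single x i)) i)⟩
  unfold alg1Step
  rw [if_pos hc, wtot_single]
  exact ⟨hwx, hc.2⟩

lemma foldl_preserves {X : Type*} [Fintype X] [DecidableEq X] {k : ℕ} [NeZero k]
    (g : KSet X k → ℝ) (w : X → ℝ) (hw : ∀ x, 0 < w x) (τ θ A : ℝ)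
    (hθ : 0 < θ) (l : List X) (s : KSet X k)
    (hQ : wtot w s ≤ A ∧ τ ≤ g s) :
    wtot w (l.foldl (alg1Step g w τ θ A) s) ≤ A ∧
      τ ≤ g (l.foldl (alg1Step g w τ θ A) s) := by
  induction l generalizing s with
  | nil => exact hQ
  | cons a t ih =>
    exact ih _ (alg1Step_preserves g w hw τ θ A hθ s a hQ)

/-- **Lemma 2, monotone case.** If the output of Algorithm 1
(with inputs `τ`, `W̄`, `ε`, hence `θ = ετ/W̄` and `A = ((3-ε)/(2ε))·W̄` in the
monotone case) contains a big element, then `w(𝐬) ≤ ((3-ε)/(2ε))·W̄` and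
`g 𝐬 ≥ τ`. -/
theorem lemma2_monotone {X : Type*} [Fintype X] [DecidableEq X] {k : ℕ} [NeZero k]
    (g : KSet X k → ℝ) (hnn : ∀ s : KSet X k, 0 ≤ g s) (hsub : KSubmodular g)
    (hmono : KMonotone g) (hnorm : g (KSet.bot X k) = 0)
    (w : X → ℝ) (hw : ∀ x, 0 < w x)
    (τ Wbar ε : ℝ) (hτ : 0 < τ) (hW : 0 < Wbar) (hε0 : 0 < ε) (hε1 : ε ≤ 1)
    (order : List X) (hnodup : order.Nodup) (hfull : ∀ x : X, x ∈ order)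
    (hbig : ∃ x : X,
      alg1 g w τ (ε * τ / Wbar) ((3 - ε) / (2 * ε) * Wbar) order x ≠ none ∧
      IsBig g w τ ((3 - ε) / (2 * ε) * Wbar) x) :
    wtot w (alg1 g w τ (ε * τ / Wbar) ((3 - ε) / (2 * ε) * Wbar) order) ≤
        (3 - ε) / (2 * ε) * Wbar ∧
      τ ≤ g (alg1 g w τ (ε * τ / Wbar) ((3 - ε) / (2 * ε) * Wbar) order) := by
  obtain ⟨x, _, hxbig⟩ := hbig
  obtain ⟨l1, l2, rfl⟩ := List.append_of_mem (hfull x)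
  have hθ : 0 < ε * τ / Wbar := by positivity
  set θ := ε * τ / Wbar
  set A := (3 - ε) / (2 * ε) * Wbar
  unfold alg1
  rw [List.foldl_append, List.foldl_cons]
  exact foldl_preserves g w hw τ θ A hθ l2 _
    (alg1Step_big g w τ θ A _ x hxbig)
end
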